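/- Let κ*, ρ, σ, φ, T, Δ ∈ ℝ with σ ≠ 0 and Δ > 0. Set a = κ* − ρσφ and assume a² + σ²(φ − φ²) > 0; set b = √(a² + σ²(φ − φ²)) and assume a ≠ b, and set g = (a + b)/(a − b). Define D : ℝ → ℝ by D(t) = ((a + b)/σ²) · (1 − e^{b(T+Δ−t)}) / (1 − g e^{b(T+Δ−t)}). Let t₀ ≤ T + Δ and assume 1 − g e^{b(T+Δ−t)} ≠ 0 for all t ∈ [t₀, T+Δ]. Then D is differentiable on [t₀, T+Δ] with −D′(t) = (1/2)φ(φ − 1) + (ρσφ − κ*)D(t) + (1/2)σ²D(t)², and D(T+Δ) = 0. -/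

import Mathlib

theorem riccati_alg (a b σ φ g E : ℝ) (hσ : σ ≠ 0) (hab' : a - b ≠ 0)
    (hg : g = (a + b) / (a - b)) (hb2 : b ^ 2 = a ^ 2 + σ ^ 2 * (φ - φ ^ 2))
    (hdt : 1 - g * E ≠ 0) :
    -((1 : ℝ) / 2 * φ * (φ - 1) + -a * ((a + b) / σ ^ 2 * ((1 - E) / (1 - g * E))) +
        1 / 2 * σ ^ 2 * ((a + b) / σ ^ 2 * ((1 - E) / (1 - g * E))) ^ 2) =
      (a + b) / σ ^ 2 * ((-(E * -b) * (1 - g * E) - (1 - E) * -(g * (E * -b))) / (1 - g * E) ^ 2) := by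
  have hφ : (1 : ℝ) / 2 * φ * (φ - 1) = (a ^ 2 - b ^ 2) / (2 * σ ^ 2) := by
    rw [eq_div_iff (by positivity)]
    nlinarith [hb2]
  rw [hφ]
  subst hg
  have h2 : a - b - (a + b) * E ≠ 0 := by
    intro h
    apply hdt
    field_simp
    linarith [h]
  field_simp
  ring

/-- The Heston Riccati coefficient `D(φ,t)`: it is differentiable on `[t₀, T+Δ]`,
satisfies `−D' = ½φ(φ−1) + (ρσφ − κ*)D + ½σ²D²`, and `D(T+Δ) = 0`. -/
theorem stmt1 (κ ρ σ φ T Δ t₀ a b g : ℝ) (hσ : σ ≠ 0) (hΔ : 0 < Δ)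
    (ha : a = κ - ρ * σ * φ)
    (hpos : 0 < a ^ 2 + σ ^ 2 * (φ - φ ^ 2))
    (hb : b = Real.sqrt (a ^ 2 + σ ^ 2 * (φ - φ ^ 2)))
    (hab : a ≠ b)
    (hg : g = (a + b) / (a - b))
    (D : ℝ → ℝ)
    (hD : D = fun t => (a + b) / σ ^ 2 *
      ((1 - Real.exp (b * (T + Δ - t))) / (1 - g * Real.exp (b * (T + Δ - t)))))
    (ht₀ : t₀ ≤ T + Δ)
    (hden : ∀ t ∈ Set.Icc t₀ (T + Δ), 1 - g * Real.exp (b * (T + Δ - t)) ≠ 0) :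
    (∀ t ∈ Set.Icc t₀ (T + Δ),
      HasDerivWithinAt D
        (-((1 / 2) * φ * (φ - 1) + (ρ * σ * φ - κ) * D t + (1 / 2) * σ ^ 2 * (D t) ^ 2))
        (Set.Icc t₀ (T + Δ)) t) ∧
    D (T + Δ) = 0 := by
  have hb2 : b ^ 2 = a ^ 2 + σ ^ 2 * (φ - φ ^ 2) := by
    rw [hb]; exact Real.sq_sqrt hpos.le
  have hab' : a - b ≠ 0 := sub_ne_zero.mpr hab
  have hρκ : ρ * σ * φ - κ = -a := by rw [ha]; ring
  constructor
  · intro t ht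
    have hdt := hden t ht
    set E : ℝ := Real.exp (b * (T + Δ - t)) with hE
    have h1 : HasDerivAt (fun t : ℝ => b * (T + Δ - t)) (-b) t := by
      simpa using ((hasDerivAt_id t).const_sub (T + Δ)).const_mul b
    have hEd : HasDerivAt (fun t : ℝ => Real.exp (b * (T + Δ - t))) (E * (-b)) t := h1.exp
    have hN : HasDerivAt (fun t : ℝ => 1 - Real.exp (b * (T + Δ - t))) (-(E * (-b))) t :=
      hEd.const_sub 1
    have hDen : HasDerivAt (fun t : ℝ => 1 - g * Real.exp (b * (T + Δ - t)))
        (-(g * (E * (-b)))) t := (hEd.const_mul g).const_sub 1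
    have hq := (hN.div hDen hdt).const_mul ((a + b) / σ ^ 2)
    rw [hD]
    refine HasDerivAt.hasDerivWithinAt ?_
    refine hq.congr_deriv ?_
    rw [hρκ, ← hE]
    exact (riccati_alg a b σ φ g E hσ hab' hg hb2 hdt).symm
  · rw [hD]
    simp
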